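/- arXiv:2504.02966 — 3 statements merged into one kernel-verified Lean document; each statement's English description precedes it below -/
import Mathlib

section
/- For every prime p, the local ring 𝔽_p⟦x, y, z⟧/(x³ + y³ + xyz) is F-pure. -/
universe u v

open TensorProduct CategoryTheory

/-- A ring homomorphism `f : R →+* S` is *pure* if for every `R`-module `M`, the induced map
`M ⊗[R] R → M ⊗[R] S` is injective (where `S` is viewed as an `R`-module via `f`). -/
def IsPureRingHom {R : Type u} {S : Type v} [CommRing R] [CommRing S] (f : R →+* S) : Prop :=
  letI := f.toAlgebra
  ∀ (M : Type u) [AddCommGroup M] [Module R M],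
    Function.Injective (LinearMap.lTensor M (Algebra.linearMap R S))

/-- A ring of characteristic `p` is *F-pure* if the Frobenius endomorphism `r ↦ r ^ p`
is a pure ring homomorphism. -/
def IsFPure (p : ℕ) (R : Type u) [CommRing R] : Prop :=
  CharP R p ∧ ∀ F : R →+* R, (∀ r, F r = r ^ p) → IsPureRingHom F

/-- `R` has finite injective dimension as a module over itself: there is an injective
resolution of `R` that vanishes in all sufficiently large degrees. -/
def HasFiniteInjDim (R : Type u) [CommRing R] : Prop :=
  ∃ (I : InjectiveResolution (ModuleCat.of R R)) (n : ℕ),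
    ∀ m : ℕ, n ≤ m → Limits.IsZero (I.cocomplex.X m)

/-- A Noetherian local ring with finite injective dimension over itself. -/
def IsGorensteinLocal (R : Type u) [CommRing R] : Prop :=
  IsNoetherianRing R ∧ IsLocalRing R ∧ HasFiniteInjDim R

/-- A Noetherian ring `R` is a *splinter* if every module-finite ring map `R → S` inducing a
surjection on prime spectra admits an `R`-linear left inverse. -/
def IsSplinter (R : Type u) [CommRing R] : Prop :=
  ∀ (S : Type u) [CommRing S] (f : R →+* S), f.Finite →
    Function.Surjective (PrimeSpectrum.comap f) →
    letI := f.toAlgebra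
    ∃ g : S →ₗ[R] R, ∀ r : R, g (f r) = r

/-- A ring `R` is *perfectoid* (with respect to the prime `p`) if it is `p`-adically complete,
Frobenius is surjective on `R/pR`, the kernel of Fontaine's map `θ : W(R♭) → R` is principal,
and `p` admits a `p`-th root up to a unit. -/
def IsPerfectoid (p : ℕ) [Fact p.Prime] (R : Type u) [CommRing R] : Prop :=
  IsAdicComplete (Ideal.span {(p : R)}) R ∧
  Function.Surjective (fun x : R ⧸ Ideal.span {(p : R)} => x ^ p) ∧
  (∀ (_ : CharP (R ⧸ Ideal.span {(p : R)}) p),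
    ∃ θ : WittVector p (Perfection (R ⧸ Ideal.span {(p : R)}) p) →+* R,
      (∀ w, Ideal.Quotient.mk (Ideal.span {(p : R)}) (θ w) =
        Perfection.coeff (R ⧸ Ideal.span {(p : R)}) p 0 (w.coeff 0)) ∧
      (RingHom.ker θ).IsPrincipal) ∧
  ∃ ϖ u : R, IsUnit u ∧ ϖ ^ p = (p : R) * u

/-- A local ring `(R, 𝔪)` with `p ∈ 𝔪` is *perfectoid pure* if it admits a pure ring map to
some perfectoid ring. -/
def IsPerfectoidPure (p : ℕ) [Fact p.Prime] (R : Type u) [CommRing R] : Prop :=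
  ∃ (B : Type u) (_ : CommRing B) (f : R →+* B), IsPerfectoid p B ∧ IsPureRingHom f

/-- `R` is a `[𝔭, x]`-subring of `T`: a quasi-local subring of `T` whose maximal ideal is the
contraction of the maximal ideal of `T` (equivalently, units of `R` are exactly the elements of
`R` that are units of `T`), of cardinality strictly smaller than that of `T`, meeting every
prime `𝔮 ⊆ 𝔭` with `x ∉ 𝔮` in `(0)`. -/
def IsPXSubring {T : Type u} [CommRing T] (𝔭 : Ideal T) (x : T) (R : Subring T) : Prop :=
  (∀ r : R, ¬ IsUnit r ↔ ¬ IsUnit (r : T)) ∧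
  Cardinal.mk R < Cardinal.mk T ∧
  ∀ 𝔮 : Ideal T, 𝔮.IsPrime → 𝔮 ≤ 𝔭 → x ∉ 𝔮 → ∀ r ∈ 𝔮, r ∈ R → r = 0

/-- `M_{I,x} = ⋃_{e ≥ 0} ⋂_{f ≥ e} (I^{[p^f]} : x^{p^f})`. -/
def FrobColonUnion {A : Type u} [CommRing A] (p : ℕ) (I : Ideal A) (x : A) : Set A :=
  ⋃ e : ℕ, ⋂ f : ℕ, ⋂ (_ : e ≤ f),
    (↑(Submodule.colon (Ideal.span ((fun a => a ^ p ^ f) '' (I : Set A)))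
        (Ideal.span {x ^ p ^ f})) : Set A)

lemma isPure_of_section {R : Type u} {S : Type v} [CommRing R] [CommRing S] (f : R →+* S)
    (g : S → R) (gadd : ∀ a b, g (a + b) = g a + g b)
    (hg : ∀ r s, g (f r * s) = r * g s) (hg1 : g 1 = 1) : IsPureRingHom f := by
  letI := f.toAlgebra
  have halg : algebraMap R S = f := rfl
  intro M _ _
  let G : S →ₗ[R] R :=
    { toFun := g, map_add' := gadd,
      map_smul' := fun r s => by
        simp only [RingHom.id_apply, smul_eq_mul]
        rw [Algebra.smul_def, halg, hg] }
  have hcomp : G.comp (Algebra.linearMap R S) = LinearMap.id := by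
    apply LinearMap.ext
    intro r
    simp only [LinearMap.comp_apply, Algebra.linearMap_apply, LinearMap.id_apply, halg]
    show g (f r) = r
    calc g (f r) = g (f r * 1) := by rw [mul_one]
    _ = r * g 1 := hg r 1
    _ = r := by rw [hg1, mul_one]
  intro x y hxy
  have h2 := congrArg (LinearMap.lTensor M G) hxy
  rwa [← LinearMap.comp_apply, ← LinearMap.comp_apply, ← LinearMap.lTensor_comp, hcomp,
    LinearMap.lTensor_id, LinearMap.id_apply, LinearMap.id_apply] at h2

namespace FPureAux

open MvPowerSeries Finset

variable (p : ℕ) [Fact p.Prime]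

abbrev P (p : ℕ) := MvPowerSeries (Fin 3) (ZMod p)

noncomputable def ee : Fin 3 →₀ ℕ := Finsupp.equivFunOnFinite.symm 1

lemma ee_apply (i : Fin 3) : ee i = 1 := rfl

noncomputable def dd (p : ℕ) : Fin 3 →₀ ℕ := (p - 1) • ee

lemma dd_apply (i : Fin 3) : dd p i = p - 1 := by
  simp [dd, ee_apply]

/-- `p`-th root extraction twisted by `dd`. -/
noncomputable def frobTr (g : P p) : P p :=
  fun γ => coeff (R := ZMod p) (p • γ + dd p) g

lemma coeff_frobTr (g : P p) (γ : Fin 3 →₀ ℕ) :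
    coeff (R := ZMod p) γ (frobTr p g) = coeff (R := ZMod p) (p • γ + dd p) g := rfl

lemma frobTr_sub (g h : P p) : frobTr p (g - h) = frobTr p g - frobTr p h := by
  ext γ
  simp [coeff_frobTr, map_sub]

lemma frobTr_add (g h : P p) : frobTr p (g + h) = frobTr p g + frobTr p h := by
  ext γ
  simp [coeff_frobTr, map_add]

lemma smul_apply' (n : ℕ) (γ : Fin 3 →₀ ℕ) (i : Fin 3) : (n • γ) i = n * γ i := by
  simp

lemma smul_le_iff (μ γ : Fin 3 →₀ ℕ) : p • μ ≤ p • γ + dd p ↔ μ ≤ γ := by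
  have hp : 0 < p := (Fact.out : p.Prime).pos
  constructor
  · intro h
    rw [Finsupp.le_def] at h ⊢
    intro i
    have h1 := h i
    rw [Finsupp.add_apply, smul_apply', smul_apply', dd_apply] at h1
    by_contra hc
    push_neg at hc
    have h2 : p * (γ i + 1) ≤ p * μ i := Nat.mul_le_mul_left p hc
    rw [Nat.mul_add, Nat.mul_one] at h2
    omega
  · intro h
    rw [Finsupp.le_def] at h ⊢
    intro i
    rw [Finsupp.add_apply, smul_apply', smul_apply', dd_apply]
    exact le_trans (Nat.mul_le_mul_left p (h i)) (Nat.le_add_right _ _)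

lemma sub_smul' (μ γ : Fin 3 →₀ ℕ) (h : μ ≤ γ) :
    (p • γ + dd p) - p • μ = p • (γ - μ) + dd p := by
  ext i
  rw [Finsupp.le_def] at h
  have hi := h i
  simp only [Finsupp.tsub_apply, Finsupp.add_apply, Finsupp.smul_apply, smul_eq_mul, dd_apply]
  obtain ⟨t, ht⟩ := Nat.le.dest hi
  rw [← ht, Nat.add_sub_cancel_left, Nat.mul_add]
  generalize p * μ i = a
  generalize p * t = b
  omega

lemma monomial_pow' (ν : Fin 3 →₀ ℕ) (c : ZMod p) (n : ℕ) :
    (monomial (R := ZMod p) ν c) ^ n = monomial (R := ZMod p) (n • ν) (c ^ n) := by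
  induction n with
  | zero => simp [monomial_zero_one]
  | succ n ih => rw [pow_succ, ih, monomial_mul_monomial, succ_nsmul, pow_succ]

instance : CharP (P p) p := by
  have : Function.Injective (C (σ := Fin 3) (R := ZMod p)) := fun a b h => by
    have := congrArg (constantCoeff (σ := Fin 3) (R := ZMod p)) h
    simpa using this
  exact charP_of_injective_ringHom this p

example : ExpChar (P p) p := by
  exact ExpChar.prime (Fact.out : p.Prime)

lemma coeff_mul_congr {α : Fin 3 →₀ ℕ} {r r' s s' : P p}
    (hr : ∀ β ≤ α, coeff (R := ZMod p) β r = coeff (R := ZMod p) β r')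
    (hs : ∀ β ≤ α, coeff (R := ZMod p) β s = coeff (R := ZMod p) β s') :
    ∀ β ≤ α, coeff (R := ZMod p) β (r * s) = coeff (R := ZMod p) β (r' * s') := by
  classical
  intro β hβ
  rw [coeff_mul, coeff_mul]
  refine Finset.sum_congr rfl fun x hx => ?_
  rw [Finset.HasAntidiagonal.mem_antidiagonal] at hx
  have h1 : x.1 ≤ α := le_trans (hx ▸ le_self_add) hβ
  have h2 : x.2 ≤ α := le_trans (hx ▸ le_add_self) hβ
  rw [hr x.1 h1, hs x.2 h2]

lemma coeff_pow_congr {α : Fin 3 →₀ ℕ} {r r' : P p}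
    (hr : ∀ β ≤ α, coeff (R := ZMod p) β r = coeff (R := ZMod p) β r') (n : ℕ) :
    ∀ β ≤ α, coeff (R := ZMod p) β (r ^ n) = coeff (R := ZMod p) β (r' ^ n) := by
  induction n with
  | zero => intro β _; rw [pow_zero, pow_zero]
  | succ n ih =>
    intro β hβ
    rw [pow_succ, pow_succ]
    exact coeff_mul_congr p ih hr β hβ


lemma frobTr_monomial_pow_mul (μ : Fin 3 →₀ ℕ) (c : ZMod p) (s : P p) :
    frobTr p ((monomial (R := ZMod p) μ c) ^ p * s) = monomial (R := ZMod p) μ c * frobTr p s := by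
  ext γ
  rw [coeff_frobTr, monomial_pow', ZMod.pow_card, coeff_monomial_mul, coeff_monomial_mul]
  by_cases h : μ ≤ γ
  · rw [if_pos ((smul_le_iff p μ γ).mpr h), if_pos h, sub_smul' p μ γ h, coeff_frobTr]
  · rw [if_neg (fun hc => h ((smul_le_iff p μ γ).mp hc)), if_neg h]

lemma frobTr_pow_mul (r s : P p) : frobTr p (r ^ p * s) = r * frobTr p s := by
  classical
  have hp : 0 < p := (Fact.out : p.Prime).pos
  haveI : ExpChar (P p) p := ExpChar.prime (Fact.out : p.Prime)
  ext γ
  set α := p • γ + dd p with hα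
  have hγα : γ ≤ α := by
    rw [Finsupp.le_def]
    intro i
    rw [Finsupp.add_apply, smul_apply']
    calc γ i ≤ p * γ i := Nat.le_mul_of_pos_left _ hp
    _ ≤ p * γ i + dd p i := Nat.le_add_right _ _
  set r' : P p := ∑ β ∈ Finset.Iic α, monomial (R := ZMod p) β (coeff (R := ZMod p) β r) with hr'
  have hagree : ∀ β ≤ α, coeff (R := ZMod p) β r = coeff (R := ZMod p) β r' := by
    intro β hβ
    rw [hr', map_sum]
    rw [Finset.sum_congr rfl (fun β' _ => coeff_monomial β β' _),
      Finset.sum_ite_eq _ β (fun β' => coeff (R := ZMod p) β' r), if_pos (Finset.mem_Iic.mpr hβ)]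
  calc coeff (R := ZMod p) γ (frobTr p (r ^ p * s)) = coeff (R := ZMod p) α (r ^ p * s) := rfl
    _ = coeff (R := ZMod p) α (r' ^ p * s) :=
        coeff_mul_congr p (coeff_pow_congr p hagree p) (fun _ _ => rfl) α le_rfl
    _ = ∑ β ∈ Finset.Iic α,
        coeff (R := ZMod p) α ((monomial (R := ZMod p) β (coeff (R := ZMod p) β r)) ^ p * s) := by
        rw [hr', sum_pow_char, Finset.sum_mul, map_sum]
    _ = ∑ β ∈ Finset.Iic α,
        coeff (R := ZMod p) γ (monomial (R := ZMod p) β (coeff (R := ZMod p) β r) * frobTr p s) := by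
        refine Finset.sum_congr rfl fun β _ => ?_
        rw [← frobTr_monomial_pow_mul, coeff_frobTr]
    _ = coeff (R := ZMod p) γ (r' * frobTr p s) := by rw [hr', Finset.sum_mul, map_sum]
    _ = coeff (R := ZMod p) γ (r * frobTr p s) :=
        (coeff_mul_congr p (fun β hβ => (hagree β (le_trans hβ hγα)).symm)
          (fun _ _ => rfl) γ le_rfl)


noncomputable def fpoly (p : ℕ) : P p :=
  X 0 ^ 3 + X 1 ^ 3 + X 0 * X 1 * X 2

lemma onlyXY_pow (φ : P p) (hφ : ∀ α : Fin 3 →₀ ℕ, α 2 ≠ 0 → coeff (R := ZMod p) α φ = 0) (n : ℕ) :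
    ∀ α : Fin 3 →₀ ℕ, α 2 ≠ 0 → coeff (R := ZMod p) α (φ ^ n) = 0 := by
  classical
  induction n with
  | zero =>
    intro α hα
    rw [pow_zero, coeff_one, if_neg]
    rintro rfl
    exact hα rfl
  | succ n ih =>
    intro α hα
    rw [pow_succ, coeff_mul]
    refine Finset.sum_eq_zero fun x hx => ?_
    rw [Finset.HasAntidiagonal.mem_antidiagonal] at hx
    have : x.1 2 + x.2 2 = α 2 := by rw [← hx]; rfl
    by_cases h1 : x.1 2 = 0
    · rw [hφ x.2 (by omega), mul_zero]
    · rw [ih x.1 h1, zero_mul]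

lemma onlyXY_g : ∀ α : Fin 3 →₀ ℕ, α 2 ≠ 0 →
    coeff (R := ZMod p) α (X 0 ^ 3 + X 1 ^ 3 : P p) = 0 := by
  classical
  intro α hα
  rw [map_add, X_pow_eq, X_pow_eq, coeff_monomial, coeff_monomial, if_neg, if_neg, add_zero]
  · rintro rfl
    exact hα (by simp [Finsupp.single_apply])
  · rintro rfl
    exact hα (by simp [Finsupp.single_apply])

lemma xyz_eq : (X 0 * X 1 * X 2 : P p) = monomial (R := ZMod p) ee 1 := by
  have h0 := X_pow_eq (R := ZMod p) (0 : Fin 3) 1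
  have h1 := X_pow_eq (R := ZMod p) (1 : Fin 3) 1
  have h2 := X_pow_eq (R := ZMod p) (2 : Fin 3) 1
  rw [pow_one] at h0 h1 h2
  have hee : ((Finsupp.single (0 : Fin 3) 1) + Finsupp.single 1 1) + Finsupp.single 2 1 = ee := by
    apply Finsupp.ext
    intro i
    rw [Finsupp.add_apply, Finsupp.add_apply, ee_apply]
    fin_cases i <;> simp
  rw [h0, h1, h2, monomial_mul_monomial, monomial_mul_monomial, one_mul, one_mul, hee]

lemma coeff_dd_fpow : coeff (R := ZMod p) (dd p) (fpoly p ^ (p - 1)) = 1 := by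
  classical
  set n := p - 1 with hn
  have hfe : fpoly p = (X 0 ^ 3 + X 1 ^ 3) + monomial (R := ZMod p) ee 1 := by
    rw [fpoly, xyz_eq]
  rw [hfe, add_pow, map_sum]
  rw [Finset.sum_eq_single 0]
  · rw [pow_zero, one_mul, Nat.choose_zero_right, Nat.cast_one, mul_one, Nat.sub_zero,
      monomial_pow', one_pow]
    have : n • ee = dd p := rfl
    rw [this, coeff_monomial_same]
  · intro k hk hk0
    rw [Finset.mem_range] at hk
    have hkn : k ≤ n := by omega
    rw [monomial_pow', one_pow, mul_comm _ ((n.choose k : P p)), ← nsmul_eq_mul, map_nsmul]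
    rw [coeff_mul_monomial]
    by_cases hle : (n - k) • ee ≤ dd p
    · rw [if_pos hle, onlyXY_pow p _ (onlyXY_g p) k, zero_mul, smul_zero]
      rw [Finsupp.tsub_apply, Finsupp.smul_apply, smul_eq_mul, dd_apply, ee_apply, mul_one,
        ← hn]
      omega
    · rw [if_neg hle, smul_zero]
  · intro h
    exact absurd (Finset.mem_range.mpr (Nat.succ_pos n)) h

lemma isUnit_frobTr_fpow : IsUnit (frobTr p (fpoly p ^ (p - 1))) := by
  rw [isUnit_iff_constantCoeff]
  have : constantCoeff (σ := Fin 3) (R := ZMod p) (frobTr p (fpoly p ^ (p - 1))) = 1 := by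
    rw [← coeff_zero_eq_constantCoeff_apply, coeff_frobTr, smul_zero, zero_add, coeff_dd_fpow]
  rw [this]
  exact isUnit_one

lemma constantCoeff_fpoly : constantCoeff (σ := Fin 3) (R := ZMod p) (fpoly p) = 0 := by
  simp [fpoly]

end FPureAux

namespace FPureAux

open MvPowerSeries Finset

theorem main (p : ℕ) [Fact p.Prime] : IsFPure p (P p ⧸ Ideal.span {fpoly p}) := by
  classical
  have hp1 : p - 1 + 1 = p := Nat.succ_pred_eq_of_pos (Fact.out : p.Prime).pos
  set I : Ideal (P p) := Ideal.span {fpoly p} with hI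
  have hItop : I ≠ ⊤ := by
    intro h
    have h1 : (1 : P p) ∈ I := h ▸ Submodule.mem_top
    rw [hI, Ideal.mem_span_singleton] at h1
    have h2 := isUnit_of_dvd_one h1
    rw [isUnit_iff_constantCoeff, constantCoeff_fpoly] at h2
    exact h2.ne_zero rfl
  haveI : Nontrivial (P p ⧸ I) := Ideal.Quotient.nontrivial_iff.mpr hItop
  constructor
  · have hinj : Function.Injective ((Ideal.Quotient.mk I).comp (C (σ := Fin 3) (R := ZMod p))) :=
      RingHom.injective _
    exact charP_of_injective_ringHom hinj p
  · intro F hF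
    obtain ⟨u, hu⟩ := isUnit_frobTr_fpow p
    set Φ : P p → P p := fun a => ↑u⁻¹ * frobTr p (fpoly p ^ (p - 1) * a) with hΦ
    have hΦadd : ∀ a b, Φ (a + b) = Φ a + Φ b := fun a b => by
      rw [hΦ]; simp only
      rw [mul_add, frobTr_add, mul_add]
    have hΦp : ∀ r a, Φ (r ^ p * a) = r * Φ a := fun r a => by
      rw [hΦ]; simp only
      rw [show fpoly p ^ (p - 1) * (r ^ p * a) = r ^ p * (fpoly p ^ (p - 1) * a) by ring,
        frobTr_pow_mul, mul_left_comm]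
    have hΦI : ∀ a ∈ I, Φ a ∈ I := by
      intro a ha
      rw [hI, Ideal.mem_span_singleton'] at ha
      obtain ⟨c, hc⟩ := ha
      rw [hΦ]; simp only
      have hfp : fpoly p ^ (p - 1) * fpoly p = fpoly p ^ p := by rw [← pow_succ, hp1]
      rw [← hc, mul_comm c (fpoly p), ← mul_assoc, hfp, frobTr_pow_mul]
      exact Ideal.mem_span_singleton.mpr ⟨↑u⁻¹ * frobTr p c, by ring⟩
    have hwd : ∀ a b : P p, Ideal.Quotient.mk I a = Ideal.Quotient.mk I b →
        Ideal.Quotient.mk I (Φ a) = Ideal.Quotient.mk I (Φ b) := by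
      intro a b hab
      rw [Ideal.Quotient.eq] at hab ⊢
      have hΦsub : Φ a - Φ b = Φ (a - b) := by
        rw [hΦ]; simp only
        rw [show fpoly p ^ (p - 1) * (a - b)
            = fpoly p ^ (p - 1) * a - fpoly p ^ (p - 1) * b from mul_sub _ _ _,
          frobTr_sub, mul_sub]
      rw [hΦsub]
      exact hΦI _ hab
    have hΦ1 : Φ 1 = 1 := by
      rw [hΦ]; simp only
      rw [mul_one, ← hu, Units.inv_mul]
    set sec : (P p ⧸ I) → P p := Function.surjInv Ideal.Quotient.mk_surjective with hsec0
    have hsec : ∀ x, Ideal.Quotient.mk I (sec x) = x := fun x =>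
      Function.surjInv_eq Ideal.Quotient.mk_surjective x
    set g : (P p ⧸ I) → (P p ⧸ I) := fun x => Ideal.Quotient.mk I (Φ (sec x)) with hg0
    have hgmk : ∀ a : P p, g (Ideal.Quotient.mk I a) = Ideal.Quotient.mk I (Φ a) := fun a =>
      hwd _ _ (hsec _)
    have hgadd : ∀ x y, g (x + y) = g x + g y := by
      intro x y
      have h1 : x + y = Ideal.Quotient.mk I (sec x + sec y) := by rw [map_add, hsec, hsec]
      rw [h1, hgmk, hΦadd, map_add, ← hgmk, ← hgmk, hsec, hsec]
    have hgmul : ∀ r x, g (F r * x) = r * g x := by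
      intro r x
      have h1 : F r * x = Ideal.Quotient.mk I (sec r ^ p * sec x) := by
        rw [map_mul, map_pow, hsec, hsec, hF]
      rw [h1, hgmk, hΦp, map_mul, hsec]
    have hg1 : g 1 = 1 := by
      have h1 : (1 : P p ⧸ I) = Ideal.Quotient.mk I 1 := (map_one _).symm
      rw [h1, hgmk, hΦ1]
    exact isPure_of_section F g hgadd hgmul hg1

end FPureAux

/-- For every prime `p`, the local ring `𝔽_p⟦x, y, z⟧/(x³ + y³ + xyz)` is `F`-pure. -/
theorem isFPure_fermat_like (p : ℕ) [Fact p.Prime] :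
    IsFPure p (MvPowerSeries (Fin 3) (ZMod p) ⧸
      Ideal.span {(MvPowerSeries.X 0 : MvPowerSeries (Fin 3) (ZMod p)) ^ 3 +
        MvPowerSeries.X 1 ^ 3 + MvPowerSeries.X 0 * MvPowerSeries.X 1 * MvPowerSeries.X 2}) := by
  exact FPureAux.main p
end

section
/- Let p be a prime with p ≡ 2 (mod 3). Then the local ring 𝔽_p⟦x, y, z⟧/(x³ + y³ + z³) is not F-pure. -/
universe u v

open TensorProduct CategoryTheory

section AuxForFermatCubic

open MvPowerSeries

theorem mem_of_isPureRingHom {R : Type u} {S : Type v} [CommRing R] [CommRing S] (f : R →+* S)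
    (h : IsPureRingHom f) (I : Ideal R) (r : R)
    (hr : f r ∈ Ideal.span (f '' (I : Set R))) : r ∈ I := by
  letI := f.toAlgebra
  have halg : algebraMap R S = f := rfl
  have hmk : ∀ b : R, b • (Ideal.Quotient.mk I 1) = Ideal.Quotient.mk I b := by
    intro b
    show b • I.mkQ (1 : R) = I.mkQ b
    rw [← map_smul]
    simp
  have h0 : ∀ s ∈ Ideal.span (f '' (I : Set R)),
      ∀ a : S, (Ideal.Quotient.mk I 1) ⊗ₜ[R] (a * s) = (0 : (R ⧸ I) ⊗[R] S) := by
    intro s hs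
    refine Submodule.span_induction ?_ ?_ ?_ ?_ hs
    · rintro x ⟨b, hb, rfl⟩ a
      have hfb : a * f b = b • a := by
        rw [Algebra.smul_def, halg, mul_comm]
      rw [hfb, tmul_smul, smul_tmul', hmk, Ideal.Quotient.eq_zero_iff_mem.2 hb, zero_tmul]
    · intro a; rw [mul_zero, tmul_zero]
    · intro x y _ _ hx hy a; rw [mul_add, tmul_add, hx, hy, add_zero]
    · intro c x _ hx a
      have : a * c • x = (a * c) * x := by rw [smul_eq_mul, mul_assoc]
      rw [this, hx]
  have h1 : (Ideal.Quotient.mk I r) ⊗ₜ[R] (1 : S) = (0 : (R ⧸ I) ⊗[R] S) := by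
    have e1 : (Ideal.Quotient.mk I r) ⊗ₜ[R] (1 : S)
        = (Ideal.Quotient.mk I 1) ⊗ₜ[R] (1 * f r) := by
      rw [one_mul, ← hmk r, smul_tmul]
      congr 1
      rw [Algebra.smul_def, mul_one, halg]
    rw [e1]
    exact h0 _ hr 1
  have h2 := h (R ⧸ I)
  have h3 : LinearMap.lTensor (R ⧸ I) (Algebra.linearMap R S)
      ((Ideal.Quotient.mk I r) ⊗ₜ[R] (1 : R)) =
      LinearMap.lTensor (R ⧸ I) (Algebra.linearMap R S) 0 := by
    rw [map_zero, LinearMap.lTensor_tmul, Algebra.linearMap_apply, map_one, h1]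
  have h4 := h2 h3
  have h5 := congrArg (fun t => TensorProduct.rid R (R ⧸ I) t) h4
  simp only [TensorProduct.rid_tmul, one_smul, map_zero] at h5
  exact Ideal.Quotient.eq_zero_iff_mem.1 h5

-- Fact A: X0^(2p) ∈ (f, X1^p, X2^p)
theorem factA (p : ℕ) (hp3 : p % 3 = 2) (hp2 : 2 ≤ p) :
    (X 0 : MvPowerSeries (Fin 3) (ZMod p)) ^ (2 * p) ∈
      Ideal.span {(X 0 : MvPowerSeries (Fin 3) (ZMod p)) ^ 3 + X 1 ^ 3 + X 2 ^ 3,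
        X 1 ^ p, X 2 ^ p} := by
  set k : ℕ := (2 * p - 1) / 3 with hkdef
  have hk : 3 * k + 1 = 2 * p := by omega
  set J : Ideal (MvPowerSeries (Fin 3) (ZMod p)) :=
    Ideal.span {(X 0 : MvPowerSeries (Fin 3) (ZMod p)) ^ 3 + X 1 ^ 3 + X 2 ^ 3,
      X 1 ^ p, X 2 ^ p} with hJ
  rw [← Ideal.Quotient.eq_zero_iff_mem]
  set π := Ideal.Quotient.mk J with hπ
  set a := π (X 0) with ha
  set b := π (X 1) with hb
  set c := π (X 2) with hc
  have hfa : a ^ 3 = -(b ^ 3 + c ^ 3) := by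
    have h0 : π ((X 0 : MvPowerSeries (Fin 3) (ZMod p)) ^ 3 + X 1 ^ 3 + X 2 ^ 3) = 0 :=
      Ideal.Quotient.eq_zero_iff_mem.2 (Ideal.subset_span (by simp))
    simp only [map_add, map_pow] at h0
    linear_combination h0
  have hbp : b ^ p = 0 := by
    rw [hb, ← map_pow]
    exact Ideal.Quotient.eq_zero_iff_mem.2 (Ideal.subset_span (by simp))
  have hcp : c ^ p = 0 := by
    rw [hc, ← map_pow]
    exact Ideal.Quotient.eq_zero_iff_mem.2 (Ideal.subset_span (by simp))
  have hsum : (b ^ 3 + c ^ 3) ^ k = 0 := by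
    rw [add_pow]
    refine Finset.sum_eq_zero ?_
    intro i hi
    rw [Finset.mem_range] at hi
    by_cases hip : p ≤ 3 * i
    · have : (b ^ 3) ^ i = 0 := by
        rw [← pow_mul, show 3 * i = p + (3 * i - p) by omega, pow_add, hbp, zero_mul]
      rw [this, zero_mul, zero_mul]
    · have hle : p ≤ 3 * (k - i) := by omega
      have : (c ^ 3) ^ (k - i) = 0 := by
        rw [← pow_mul, show 3 * (k - i) = p + (3 * (k - i) - p) by omega, pow_add, hcp, zero_mul]
      rw [this, mul_zero, zero_mul]
  have : π ((X 0 : MvPowerSeries (Fin 3) (ZMod p)) ^ (2 * p)) = a ^ (2 * p) := by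
    rw [map_pow]
  have hz : (-(b ^ 3 + c ^ 3)) ^ k = 0 := by
    rw [show (-(b ^ 3 + c ^ 3)) = (-1) * (b ^ 3 + c ^ 3) by ring, mul_pow, hsum, mul_zero]
  rw [this, ← hk, pow_succ, pow_mul, hfa, hz, zero_mul]

-- helper for coefficient computations
theorem coeff_mul_X_pow_eq_zero {σ : Type*} {R : Type*} [CommSemiring R]
    (m : σ →₀ ℕ) (s : σ) (n : ℕ) (h : ¬ Finsupp.single s n ≤ m)
    (φ : MvPowerSeries σ R) : MvPowerSeries.coeff m (φ * X s ^ n) = 0 := by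
  classical
  rw [X_pow_eq, MvPowerSeries.coeff_mul]
  refine Finset.sum_eq_zero ?_
  rintro ⟨i, j⟩ hij
  rw [Finset.HasAntidiagonal.mem_antidiagonal] at hij
  rw [MvPowerSeries.coeff_monomial]
  split_ifs with hj
  · exact absurd (hij ▸ hj ▸ le_add_self) h
  · rw [mul_zero]

-- Fact B
theorem factB (p : ℕ) [Fact p.Prime] (u v w : MvPowerSeries (Fin 3) (ZMod p)) :
    (X 0 : MvPowerSeries (Fin 3) (ZMod p)) ^ 2 ≠
      u * X 1 + v * X 2 + w * ((X 0 : MvPowerSeries (Fin 3) (ZMod p)) ^ 3 + X 1 ^ 3 + X 2 ^ 3) := by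
  intro h
  haveI : Fact (1 < p) := ⟨(Fact.out : p.Prime).one_lt⟩
  have := congrArg (MvPowerSeries.coeff (Finsupp.single (0 : Fin 3) 2)) h
  have hle : ∀ (s : Fin 3) (n : ℕ), ¬ (Finsupp.single s n ≤ Finsupp.single (0 : Fin 3) 2) →
      True := fun _ _ _ => trivial
  rw [X_pow_eq, MvPowerSeries.coeff_monomial_same] at this
  have h1 : MvPowerSeries.coeff (Finsupp.single (0 : Fin 3) 2) (u * X 1) = 0 := by
    have := coeff_mul_X_pow_eq_zero (R := ZMod p) (Finsupp.single (0 : Fin 3) 2) (1 : Fin 3) 1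
      (by intro hle; have := hle 1; simp [Finsupp.single_apply] at this) u
    simpa using this
  have h2 : MvPowerSeries.coeff (Finsupp.single (0 : Fin 3) 2) (v * X 2) = 0 := by
    have := coeff_mul_X_pow_eq_zero (R := ZMod p) (Finsupp.single (0 : Fin 3) 2) (2 : Fin 3) 1
      (by intro hle; have := hle 2; simp [Finsupp.single_apply] at this) v
    simpa using this
  have h3 : MvPowerSeries.coeff (Finsupp.single (0 : Fin 3) 2)
      (w * ((X 0 : MvPowerSeries (Fin 3) (ZMod p)) ^ 3 + X 1 ^ 3 + X 2 ^ 3)) = 0 := by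
    rw [mul_add, mul_add, map_add, map_add]
    rw [coeff_mul_X_pow_eq_zero _ (0 : Fin 3) 3
        (by intro hle; have := hle 0; simp [Finsupp.single_apply] at this) w,
      coeff_mul_X_pow_eq_zero _ (1 : Fin 3) 3
        (by intro hle; have := hle 1; simp [Finsupp.single_apply] at this) w,
      coeff_mul_X_pow_eq_zero _ (2 : Fin 3) 3
        (by intro hle; have := hle 2; simp [Finsupp.single_apply] at this) w]
    ring
  rw [map_add, map_add, h1, h2, h3] at this
  simp at this

end AuxForFermatCubic

open MvPowerSeries in
/-- If `p ≡ 2 (mod 3)`, then `𝔽_p⟦x, y, z⟧/(x³ + y³ + z³)` is not `F`-pure. -/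
theorem not_isFPure_fermat_cubic (p : ℕ) [Fact p.Prime] (hp3 : p % 3 = 2) :
    ¬ IsFPure p (MvPowerSeries (Fin 3) (ZMod p) ⧸
      Ideal.span {(MvPowerSeries.X 0 : MvPowerSeries (Fin 3) (ZMod p)) ^ 3 +
        MvPowerSeries.X 1 ^ 3 + MvPowerSeries.X 2 ^ 3}) := by
  set f : MvPowerSeries (Fin 3) (ZMod p) :=
    (X 0 : MvPowerSeries (Fin 3) (ZMod p)) ^ 3 + X 1 ^ 3 + X 2 ^ 3 with hf
  set R := MvPowerSeries (Fin 3) (ZMod p) ⧸ Ideal.span {f} with hR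
  rintro ⟨hchar, hpure⟩
  haveI := hchar
  haveI : ExpChar R p := ExpChar.prime Fact.out
  have hF : IsPureRingHom (frobenius R p) := hpure (frobenius R p) (fun _ => rfl)
  set q : MvPowerSeries (Fin 3) (ZMod p) →+* R := Ideal.Quotient.mk (Ideal.span {f}) with hq
  have hqf : q f = 0 := Ideal.Quotient.eq_zero_iff_mem.2 (Ideal.subset_span rfl)
  set I : Ideal R := Ideal.span {q (X 1), q (X 2)} with hI
  -- transfer Fact A to R
  have hA := factA p hp3 (Fact.out : p.Prime).two_le
  rw [Ideal.mem_span_insert] at hA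
  obtain ⟨a, z, hz, hrep⟩ := hA
  rw [Ideal.mem_span_pair] at hz
  obtain ⟨u, v, huv⟩ := hz
  have hqrep : q ((X 0 : MvPowerSeries (Fin 3) (ZMod p)) ^ (2 * p))
      = q u * q (X 1 ^ p) + q v * q (X 2 ^ p) := by
    rw [hrep, ← huv, map_add, map_mul, hqf, mul_zero, zero_add, map_add, map_mul, map_mul]
  -- purity gives membership
  have hr : frobenius R p (q (X 0) ^ 2) ∈
      Ideal.span (⇑(frobenius R p) '' (I : Set R)) := by
    have h1 : frobenius R p (q (X 0) ^ 2) = q ((X 0 : MvPowerSeries (Fin 3) (ZMod p)) ^ (2 * p)) := by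
      rw [frobenius_def, ← pow_mul, map_pow]
    have m1 : q (X 1 ^ p) ∈ ⇑(frobenius R p) '' (I : Set R) :=
      ⟨q (X 1), Ideal.subset_span (by simp), by rw [frobenius_def, map_pow]⟩
    have m2 : q (X 2 ^ p) ∈ ⇑(frobenius R p) '' (I : Set R) :=
      ⟨q (X 2), Ideal.subset_span (by simp), by rw [frobenius_def, map_pow]⟩
    rw [h1, hqrep]
    exact Ideal.add_mem _ (Ideal.mul_mem_left _ _ (Ideal.subset_span m1))
      (Ideal.mul_mem_left _ _ (Ideal.subset_span m2))
  have hmem : q (X 0) ^ 2 ∈ I := mem_of_isPureRingHom (frobenius R p) hF I _ hr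
  -- derive contradiction
  rw [hI, Ideal.mem_span_pair] at hmem
  obtain ⟨α, β, hαβ⟩ := hmem
  obtain ⟨u', rfl⟩ := Ideal.Quotient.mk_surjective α
  obtain ⟨v', rfl⟩ := Ideal.Quotient.mk_surjective β
  have hz : q (u' * X 1 + v' * X 2 - X 0 ^ 2) = 0 := by
    rw [map_sub, map_add, map_mul, map_mul, map_pow]
    exact sub_eq_zero.mpr hαβ
  rw [hq, Ideal.Quotient.eq_zero_iff_mem, Ideal.mem_span_singleton'] at hz
  obtain ⟨w, hw⟩ := hz
  exact factB p u' v' (-w) (by rw [hf] at hw; linear_combination hw)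
end

section
/- Let (T, m) be a complete Noetherian local domain of mixed characteristic (0, p) and let π ∈ T be a nonzerodivisor such that T/πT is a domain of characteristic p > 0 (so πT⟦w⟧ is a prime ideal of T⟦w⟧). Then T⟦w⟧ admits an [mT⟦w⟧, π]-subring if and only if π lies in the radical of the ideal (p) of T. -/
universe u v

open TensorProduct CategoryTheory

lemma aux_mem_map_C {T : Type u} [CommRing T] (I : Ideal T) (hI : I.FG)
    (f : PowerSeries T) (hf : ∀ n, PowerSeries.coeff (R := T) n f ∈ I) :
    f ∈ I.map (PowerSeries.C (R := T)) := by
  obtain ⟨s, hs⟩ := hI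
  have hmem : ∀ n : ℕ, ∃ c : T → T, ∑ i ∈ s, c i * i = PowerSeries.coeff (R := T) n f := by
    intro n
    have h := hf n
    rw [← hs] at h
    obtain ⟨c, -, hc⟩ := Submodule.mem_span_finset.1 h
    exact ⟨c, by simpa [smul_eq_mul] using hc⟩
  choose c hc using hmem
  have hfeq : f = ∑ i ∈ s, PowerSeries.mk (fun n => c n i) * PowerSeries.C (R := T) i := by
    ext n
    rw [map_sum]
    simp only [PowerSeries.coeff_mul_C, PowerSeries.coeff_mk]
    exact (hc n).symm
  rw [hfeq]
  refine Ideal.sum_mem _ fun i hi => Ideal.mul_mem_left _ _ (Ideal.mem_map_of_mem _ ?_)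
  rw [← hs]; exact Ideal.subset_span hi

/-- Let `(T, 𝔪)` be a complete Noetherian local domain of mixed characteristic `(0,p)` and let
`π ∈ T` be a nonzerodivisor such that `T/πT` is a domain of characteristic `p` (so `πT⟦w⟧` is a
prime ideal of `T⟦w⟧`). Then `T⟦w⟧` admits an `[𝔪T⟦w⟧, π]`-subring if and only if `π` lies in
the radical of the ideal `(p)` of `T`. -/
theorem exists_px_subring_powerSeries_iff (p : ℕ) (hp : p.Prime) (T : Type u) [CommRing T]
    [IsNoetherianRing T] [IsLocalRing T] [IsDomain T]
    (hcomplete : IsAdicComplete (IsLocalRing.maximalIdeal T) T)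
    (hchar0 : CharZero T) (hres : CharP (IsLocalRing.ResidueField T) p)
    (π : T) (hπ : π ∈ nonZeroDivisors T)
    (hdom : IsDomain (T ⧸ Ideal.span {π})) (hcharp : CharP (T ⧸ Ideal.span {π}) p)
    (hπprime : (Ideal.span {(PowerSeries.C (R := T) π : PowerSeries T)}).IsPrime) :
    (∃ R : Subring (PowerSeries T),
        IsPXSubring ((IsLocalRing.maximalIdeal T).map (PowerSeries.C (R := T)))
          (PowerSeries.C (R := T) π) R) ↔
      π ∈ (Ideal.span {(p : T)}).radical := by
  classical
  constructor
  · rintro ⟨R, hR1, hR2, hR3⟩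
    rw [Ideal.radical_eq_sInf, Submodule.mem_sInf]
    rintro P ⟨hpP, hPprime⟩
    by_contra hπP
    haveI := hPprime
    set φ : PowerSeries T →+* PowerSeries (T ⧸ P) := PowerSeries.map (Ideal.Quotient.mk P) with hφ
    have hker : ∀ f : PowerSeries T, f ∈ RingHom.ker φ ↔ ∀ n, PowerSeries.coeff (R := T) n f ∈ P := by
      intro f
      rw [RingHom.mem_ker]
      constructor
      · intro h n
        have h2 := congrArg (PowerSeries.coeff (R := T ⧸ P) n) h
        rw [hφ] at h2
        simp only [PowerSeries.coeff_map, map_zero] at h2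
        exact Ideal.Quotient.eq_zero_iff_mem.1 h2
      · intro h
        ext n
        rw [hφ]
        simp only [PowerSeries.coeff_map, map_zero]
        exact Ideal.Quotient.eq_zero_iff_mem.2 (h n)
    have hQprime : (RingHom.ker φ).IsPrime := RingHom.ker_isPrime φ
    have hPm : P ≤ IsLocalRing.maximalIdeal T := IsLocalRing.le_maximalIdeal hPprime.ne_top
    have hle : RingHom.ker φ ≤ (IsLocalRing.maximalIdeal T).map (PowerSeries.C (R := T)) :=
      fun f hf => aux_mem_map_C _ (IsNoetherian.noetherian _) f fun n => hPm ((hker f).1 hf n)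
    have hπnot : PowerSeries.C (R := T) π ∉ RingHom.ker φ := by
      intro h
      have h0 := (hker _).1 h 0
      rw [PowerSeries.coeff_zero_C] at h0
      exact hπP h0
    have hpQ : ((p : ℕ) : PowerSeries T) ∈ RingHom.ker φ := by
      rw [hker]
      intro n
      have hn : ((p : ℕ) : PowerSeries T) = PowerSeries.C (R := T) ((p : ℕ) : T) := by
        rw [map_natCast]
      rw [hn, PowerSeries.coeff_C]
      split
      · exact hpP (Ideal.mem_span_singleton_self _)
      · exact P.zero_mem
    have hz := hR3 (RingHom.ker φ) hQprime hle hπnot ((p : ℕ) : PowerSeries T) hpQ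
      (natCast_mem R p)
    have hzero : ((p : ℕ) : T) = 0 := by
      have h2 := congrArg (PowerSeries.constantCoeff (R := T)) hz
      simpa using h2
    exact hp.ne_zero (Nat.cast_eq_zero.mp hzero)
  · intro hrad
    have hpZ : Prime (p : ℤ) := Int.prime_iff_natAbs_prime.2 (by simpa using hp)
    have hTunit : ∀ u : ℕ, ¬ p ∣ u → IsUnit ((u : T)) := by
      intro u hu
      by_contra h
      have hm : (u : T) ∈ IsLocalRing.maximalIdeal T := h
      have h0 : ((u : ℕ) : IsLocalRing.ResidueField T) = 0 := by
        have := Ideal.Quotient.eq_zero_iff_mem.2 hm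
        rw [map_natCast] at this
        exact this
      exact hu ((CharP.cast_eq_zero_iff _ p u).1 h0)
    have hTwunit : ∀ u : ℕ, ¬ p ∣ u → IsUnit ((u : PowerSeries T)) := by
      intro u hu
      have := (hTunit u hu).map (PowerSeries.C (R := T))
      rwa [map_natCast] at this
    have hpnonunit : ¬ IsUnit ((p : ℕ) : PowerSeries T) := by
      intro h
      have h1 : IsUnit ((p : ℕ) : T) := by
        have := h.map (PowerSeries.constantCoeff (R := T))
        rwa [map_natCast] at this
      have h2 := h1.map (IsLocalRing.residue T)
      rw [map_natCast] at h2
      rw [CharP.cast_eq_zero (IsLocalRing.ResidueField T) p] at h2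
      exact not_isUnit_zero h2
    have hintunit : ∀ b : ℤ, ¬ (p : ℤ) ∣ b → IsUnit ((b : PowerSeries T)) := by
      intro b hb
      have hnat : ¬ p ∣ b.natAbs := by
        intro h
        exact hb (Int.natCast_dvd_natCast.2 h |>.trans (Int.natAbs_dvd.2 dvd_rfl))
      have h1 := hTwunit b.natAbs hnat
      rcases Int.natAbs_eq b with h | h
      · rw [h, Int.cast_natCast]; exact h1
      · rw [h, Int.cast_neg, Int.cast_natCast]; exact h1.neg
    set S : Subring (PowerSeries T) :=
      { carrier := {x | ∃ a b : ℤ, ¬ (p : ℤ) ∣ b ∧ x * (b : PowerSeries T) = (a : PowerSeries T)}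
        one_mem' := ⟨1, 1, by exact_mod_cast hpZ.not_dvd_one, by simp⟩
        zero_mem' := ⟨0, 1, by exact_mod_cast hpZ.not_dvd_one, by simp⟩
        mul_mem' := by
          rintro x y ⟨a, b, hb, hx⟩ ⟨c, d, hd, hy⟩
          refine ⟨a * c, b * d, fun h => (hpZ.dvd_mul.mp h).elim hb hd, ?_⟩
          push_cast
          linear_combination (y * (d : PowerSeries T)) * hx + (a : PowerSeries T) * hy
        add_mem' := by
          rintro x y ⟨a, b, hb, hx⟩ ⟨c, d, hd, hy⟩
          refine ⟨a * d + c * b, b * d, fun h => (hpZ.dvd_mul.mp h).elim hb hd, ?_⟩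
          push_cast
          linear_combination (d : PowerSeries T) * hx + (b : PowerSeries T) * hy
        neg_mem' := by
          rintro x ⟨a, b, hb, hx⟩
          exact ⟨-a, b, hb, by push_cast; linear_combination -hx⟩ } with hS
    have hmemS : ∀ x : PowerSeries T, x ∈ S ↔
        ∃ a b : ℤ, ¬ (p : ℤ) ∣ b ∧ x * (b : PowerSeries T) = (a : PowerSeries T) := fun _ => Iff.rfl
    clear_value S
    refine ⟨S, ?_, ?_, ?_⟩
    · -- units condition
      rintro ⟨x, hxS⟩
      obtain ⟨a, b, hb, hx⟩ := (hmemS x).1 hxS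
      rw [not_iff_not]
      constructor
      · exact fun h => h.map S.subtype
      · intro hxu
        have hua : IsUnit ((a : PowerSeries T)) := by rw [← hx]; exact hxu.mul (hintunit b hb)
        have hpa : ¬ (p : ℤ) ∣ a := by
          rintro ⟨c, hc⟩
          have : ((a : ℤ) : PowerSeries T) = ((p : ℕ) : PowerSeries T) * ((c : ℤ) : PowerSeries T) := by
            rw [hc]; push_cast; ring
          rw [this] at hua
          exact hpnonunit (isUnit_of_mul_isUnit_left hua)
        obtain ⟨A, hA⟩ := hua
        have hyS : ((b : PowerSeries T) * (↑A⁻¹ : PowerSeries T)) ∈ S := by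
          refine (hmemS _).2 ⟨b, a, hpa, ?_⟩
          calc (b : PowerSeries T) * ↑A⁻¹ * (a : PowerSeries T)
              = (b : PowerSeries T) * ((↑A⁻¹ : PowerSeries T) * ↑A) := by rw [hA]; ring
            _ = (b : PowerSeries T) := by rw [Units.inv_mul, mul_one]
        refine isUnit_iff_exists_inv.2 ⟨⟨_, hyS⟩, ?_⟩
        apply Subtype.ext
        show x * ((b : PowerSeries T) * ↑A⁻¹) = 1
        calc x * ((b : PowerSeries T) * ↑A⁻¹) = x * (b : PowerSeries T) * ↑A⁻¹ := by ring
          _ = ↑A * ↑A⁻¹ := by rw [hx, hA]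
          _ = 1 := Units.mul_inv A
    · -- cardinality
      have hsub : (S : Set (PowerSeries T)) ⊆
          Set.range (fun ab : ℤ × ℤ =>
            ((ab.1 : ℤ) : PowerSeries T) * Ring.inverse ((ab.2 : ℤ) : PowerSeries T)) := by
        intro x hxmem
        obtain ⟨a, b, hb, hx⟩ := (hmemS x).1 hxmem
        refine ⟨(a, b), ?_⟩
        obtain ⟨B, hB⟩ := hintunit b hb
        simp only
        rw [← hx, ← hB, Ring.inverse_unit]
        calc x * ↑B * ↑B⁻¹ = x * (↑B * ↑B⁻¹) := by ring
          _ = x := by rw [Units.mul_inv, mul_one]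
      have hcount : Countable (S : Set (PowerSeries T)) :=
        ((Set.countable_range _).mono hsub).to_subtype
      have hS0 : Cardinal.mk S ≤ Cardinal.aleph0 := Cardinal.mk_le_aleph0_iff.2 hcount
      haveI huncount : Uncountable (PowerSeries T) := by
        rw [← not_countable_iff]
        intro hc
        have hinj : Function.Injective
            (fun s : Set ℕ => PowerSeries.mk (fun n => if n ∈ s then (1 : T) else 0)) := by
          intro s1 s2 h
          ext n
          have h2 := congrArg (PowerSeries.coeff (R := T) n) h
          simp only [PowerSeries.coeff_mk] at h2
          by_cases h1 : n ∈ s1 <;> by_cases h3 : n ∈ s2 <;>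
            simp [h1, h3] at h2 ⊢
        have : Countable (Set ℕ) := hinj.countable
        obtain ⟨f, hf⟩ := this.exists_injective_nat'
        exact Function.cantor_injective f hf
      exact lt_of_le_of_lt hS0 Cardinal.aleph0_lt_mk
    · -- intersection with primes
      intro 𝔮 hQ hQle hπQ x hxQ hxS
      obtain ⟨a, b, hb, hx⟩ := (hmemS x).1 hxS
      by_contra hx0
      have haQ : ((a : ℤ) : PowerSeries T) ∈ 𝔮 := hx ▸ Ideal.mul_mem_right _ _ hxQ
      have ha0 : a ≠ 0 := by
        rintro rfl
        rw [Int.cast_zero] at hx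
        rcases mul_eq_zero.1 hx with h | h
        · exact hx0 h
        · exact (hintunit b hb).ne_zero h
      obtain ⟨k, u, hu, habs⟩ :=
        Nat.exists_eq_pow_mul_and_not_dvd (Int.natAbs_ne_zero.2 ha0) p hp.ne_one
      have hnatQ : ((a.natAbs : ℕ) : PowerSeries T) ∈ 𝔮 := by
        rcases Int.natAbs_eq a with h | h
        · rw [h, Int.cast_natCast] at haQ; exact haQ
        · rw [h, Int.cast_neg, Int.cast_natCast] at haQ
          simpa using 𝔮.neg_mem haQ
      rw [habs] at hnatQ
      push_cast at hnatQ
      have hkQ : ((p : ℕ) : PowerSeries T) ^ k ∈ 𝔮 := by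
        rcases hQ.mem_or_mem hnatQ with h | h
        · exact h
        · exact absurd (𝔮.eq_top_of_isUnit_mem h (hTwunit u hu)) hQ.ne_top
      have hpQ : ((p : ℕ) : PowerSeries T) ∈ 𝔮 := hQ.mem_of_pow_mem _ hkQ
      obtain ⟨m, hm⟩ := Ideal.mem_radical_iff.1 hrad
      obtain ⟨t, ht⟩ := Ideal.mem_span_singleton'.mp hm
      have hπm : (PowerSeries.C (R := T) π) ^ m ∈ 𝔮 := by
        rw [← map_pow, ← ht, map_mul]
        have hCp : PowerSeries.C (R := T) ((p : ℕ) : T) = ((p : ℕ) : PowerSeries T) := map_natCast _ _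
        rw [hCp]
        exact Ideal.mul_mem_left _ _ hpQ
      exact hπQ (hQ.mem_of_pow_mem _ hπm)
end
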